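/- A dagger category is †-Drazin if and only if every positive map is Drazin: in a dagger category 𝒞, every map has a †-Drazin inverse if and only if every endomorphism of the form f ≫ f† (for some map f : A ⟶ B) has a Drazin inverse. -/
import Mathlib


open CategoryTheory

universe v u

/-- A dagger on a category: an identity-on-objects contravariant involution. -/
structure Dagger (C : Type u) [Category.{v} C] where
  dag : ∀ {X Y : C}, (X ⟶ Y) → (Y ⟶ X)
  dag_id : ∀ X : C, dag (𝟙 X) = 𝟙 X
  dag_comp : ∀ {X Y Z : C} (f : X ⟶ Y) (g : Y ⟶ Z), dag (f ≫ g) = dag g ≫ dag f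
  dag_dag : ∀ {X Y : C} (f : X ⟶ Y), dag (dag f) = f

/-- Iterated composition power of an endomorphism, with `cpow x 0 = 𝟙 A`. -/
def cpow {C : Type u} [Category.{v} C] {A : C} (x : A ⟶ A) : ℕ → (A ⟶ A)
  | 0 => 𝟙 A
  | n + 1 => cpow x n ≫ x

/-- `p` is a †-Drazin inverse of `f`. -/
def IsDagDrazinInv {C : Type u} [Category.{v} C] (D : Dagger C)
    {A B : C} (f : A ⟶ B) (p : B ⟶ A) : Prop :=
  (∃ k : ℕ, cpow (f ≫ D.dag f) k ≫ f ≫ p = cpow (f ≫ D.dag f) k ∧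
    p ≫ f ≫ cpow (D.dag f ≫ f) k = cpow (D.dag f ≫ f) k) ∧
  p ≫ f ≫ p = p ∧
  D.dag (f ≫ p) = f ≫ p ∧
  D.dag (p ≫ f) = p ≫ f

/-- `d` is a Drazin inverse of the endomorphism `x`. -/
def IsDrazinInv {C : Type u} [Category.{v} C] {A : C} (x d : A ⟶ A) : Prop :=
  (∃ k : ℕ, cpow x (k + 1) ≫ d = cpow x k) ∧
  d ≫ x ≫ d = d ∧
  x ≫ d = d ≫ x

section Aux

variable {C : Type u} [Category.{v} C]

lemma cpow_succ' {A : C} (x : A ⟶ A) (n : ℕ) : cpow x (n + 1) = x ≫ cpow x n := by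
  induction n with
  | zero => simp [cpow]
  | succ n ih =>
      calc cpow x (n + 2) = cpow x (n + 1) ≫ x := rfl
        _ = (x ≫ cpow x n) ≫ x := by rw [ih]
        _ = x ≫ (cpow x n ≫ x) := by rw [Category.assoc]
        _ = x ≫ cpow x (n + 1) := rfl

lemma cpow_add {A : C} (x : A ⟶ A) (m n : ℕ) :
    cpow x (m + n) = cpow x m ≫ cpow x n := by
  induction n with
  | zero => simp [cpow]
  | succ n ih =>
      show cpow x (m + n) ≫ x = cpow x m ≫ cpow x n ≫ x
      rw [ih, Category.assoc]

lemma comm_cpow {A : C} {x d : A ⟶ A} (h : x ≫ d = d ≫ x) (n : ℕ) :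
    cpow x n ≫ d = d ≫ cpow x n := by
  induction n with
  | zero => simp [cpow]
  | succ n ih =>
      show (cpow x n ≫ x) ≫ d = d ≫ cpow x n ≫ x
      rw [Category.assoc, h, ← Category.assoc, ih, Category.assoc]

lemma cpow_comp {A : C} {x d : A ⟶ A} (h : x ≫ d = d ≫ x) (n : ℕ) :
    cpow (x ≫ d) n = cpow x n ≫ cpow d n := by
  induction n with
  | zero => simp [cpow]
  | succ n ih =>
      show cpow (x ≫ d) n ≫ (x ≫ d) = (cpow x n ≫ x) ≫ cpow d n ≫ d
      rw [ih]
      calc (cpow x n ≫ cpow d n) ≫ x ≫ d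
          = cpow x n ≫ (cpow d n ≫ x) ≫ d := by simp only [Category.assoc]
        _ = cpow x n ≫ (x ≫ cpow d n) ≫ d := by rw [comm_cpow h.symm n]
        _ = (cpow x n ≫ x) ≫ cpow d n ≫ d := by simp only [Category.assoc]

lemma idem_cpow {A : C} {p : A ⟶ A} (h : p ≫ p = p) (n : ℕ) :
    cpow p (n + 1) = p := by
  induction n with
  | zero => simp [cpow]
  | succ n ih =>
      show cpow p (n + 1) ≫ p = p
      rw [ih, h]

lemma drazin_ext {A : C} {x d : A ⟶ A} {k : ℕ}
    (hk : cpow x (k + 1) ≫ d = cpow x k) (j : ℕ) :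
    cpow x (k + j + 1) ≫ d = cpow x (k + j) := by
  have h1 : k + j + 1 = j + (k + 1) := by omega
  have h2 : k + j = j + k := by omega
  rw [h1, h2, cpow_add x j (k + 1), cpow_add x j k, Category.assoc, hk]

lemma shift_cpow {A B : C} (f : A ⟶ B) (g : B ⟶ A) (n : ℕ) :
    f ≫ cpow (g ≫ f) n = cpow (f ≫ g) n ≫ f := by
  induction n with
  | zero => simp [cpow]
  | succ n ih =>
      show f ≫ cpow (g ≫ f) n ≫ (g ≫ f) = (cpow (f ≫ g) n ≫ (f ≫ g)) ≫ f
      rw [← Category.assoc, ih]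
      simp only [Category.assoc]

lemma dag_cpow (D : Dagger C) {A : C} (x : A ⟶ A) (n : ℕ) :
    D.dag (cpow x n) = cpow (D.dag x) n := by
  induction n with
  | zero => simp [cpow, D.dag_id]
  | succ n ih =>
      show D.dag (cpow x n ≫ x) = cpow (D.dag x) (n + 1)
      rw [D.dag_comp, ih, cpow_succ']

lemma drazin_unique {A : C} {x d e : A ⟶ A}
    (hd : IsDrazinInv x d) (he : IsDrazinInv x e) : d = e := by
  obtain ⟨⟨k, hk⟩, hd2, hd3⟩ := hd
  obtain ⟨⟨l, hl⟩, he2, he3⟩ := he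
  set m := k + l with hm
  have hkm : cpow x (m + 2) ≫ d = cpow x (m + 1) := by
    have := drazin_ext hk (l + 1)
    rwa [show k + (l + 1) + 1 = m + 2 by omega, show k + (l + 1) = m + 1 by omega] at this
  have hlm : cpow x (m + 2) ≫ e = cpow x (m + 1) := by
    have := drazin_ext hl (k + 1)
    rwa [show l + (k + 1) + 1 = m + 2 by omega, show l + (k + 1) = m + 1 by omega] at this
  have hxd : (x ≫ d) ≫ (x ≫ d) = x ≫ d := by
    calc (x ≫ d) ≫ (x ≫ d) = x ≫ (d ≫ x ≫ d) := by simp only [Category.assoc]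
      _ = x ≫ d := by rw [hd2]
  have hex : (e ≫ x) ≫ (e ≫ x) = e ≫ x := by
    calc (e ≫ x) ≫ (e ≫ x) = (e ≫ x ≫ e) ≫ x := by simp only [Category.assoc]
      _ = e ≫ x := by rw [he2]
  have hA1 : d ≫ cpow (x ≫ d) (m + 1) = d := by
    rw [idem_cpow hxd]; exact hd2
  have hsplit1 : cpow (x ≫ d) (m + 1) = cpow d (m + 1) ≫ cpow x (m + 1) := by
    rw [hd3, cpow_comp hd3.symm]
  have hA : d = d ≫ x ≫ e := by
    calc d = d ≫ cpow (x ≫ d) (m + 1) := hA1.symm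
      _ = d ≫ cpow d (m + 1) ≫ cpow x (m + 1) := by rw [hsplit1]
      _ = d ≫ cpow d (m + 1) ≫ cpow x (m + 2) ≫ e := by rw [hlm]
      _ = d ≫ cpow d (m + 1) ≫ (cpow x (m + 1) ≫ x) ≫ e := by
            rw [show cpow x (m + 2) = cpow x (m + 1) ≫ x from rfl]
      _ = (d ≫ (cpow d (m + 1) ≫ cpow x (m + 1))) ≫ x ≫ e := by simp only [Category.assoc]
      _ = (d ≫ cpow (x ≫ d) (m + 1)) ≫ x ≫ e := by rw [hsplit1]
      _ = d ≫ x ≫ e := by rw [hA1]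
  have hD1 : cpow (e ≫ x) (m + 1) ≫ e = e := by
    rw [idem_cpow hex, Category.assoc]; exact he2
  have hsplit2 : cpow (e ≫ x) (m + 1) = cpow x (m + 1) ≫ cpow e (m + 1) := by
    rw [← he3, cpow_comp he3]
  have hd' : d ≫ cpow x (m + 2) = cpow x (m + 1) := by
    rw [← comm_cpow hd3 (m + 2)]; exact hkm
  have hD : e = d ≫ x ≫ e := by
    calc e = cpow (e ≫ x) (m + 1) ≫ e := hD1.symm
      _ = (cpow x (m + 1) ≫ cpow e (m + 1)) ≫ e := by rw [hsplit2]
      _ = ((d ≫ cpow x (m + 2)) ≫ cpow e (m + 1)) ≫ e := by rw [hd']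
      _ = ((d ≫ x ≫ cpow x (m + 1)) ≫ cpow e (m + 1)) ≫ e := by rw [cpow_succ' x (m + 1)]
      _ = d ≫ x ≫ (cpow x (m + 1) ≫ cpow e (m + 1)) ≫ e := by simp only [Category.assoc]
      _ = d ≫ x ≫ cpow (e ≫ x) (m + 1) ≫ e := by rw [hsplit2]
      _ = d ≫ x ≫ e := by rw [hD1]
  exact hA.trans hD.symm

end Aux

/-- A dagger category is †-Drazin iff every positive map is Drazin. -/
theorem dagDrazinCategory_iff_positive_drazin {C : Type u} [Category.{v} C] (D : Dagger C) :
    (∀ (A B : C) (f : A ⟶ B), ∃ p : B ⟶ A, IsDagDrazinInv D f p) ↔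
    (∀ (A B : C) (f : A ⟶ B), ∃ d : A ⟶ A, IsDrazinInv (f ≫ D.dag f) d) := by
  constructor
  · -- forward: from †-Drazin inverses, every positive map is Drazin, via d = p† ≫ p
    intro h A B f
    obtain ⟨p, ⟨⟨k, hk1, _⟩, hp2, hp3, hp4⟩⟩ := h A B f
    have hfp : D.dag p ≫ D.dag f = f ≫ p := (D.dag_comp f p).symm.trans hp3
    have hpf : D.dag f ≫ D.dag p = p ≫ f := (D.dag_comp p f).symm.trans hp4
    have key1 : (f ≫ D.dag f) ≫ (D.dag p ≫ p) = f ≫ p := by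
      calc (f ≫ D.dag f) ≫ (D.dag p ≫ p)
          = f ≫ (D.dag f ≫ D.dag p) ≫ p := by simp only [Category.assoc]
        _ = f ≫ (p ≫ f) ≫ p := by rw [hpf]
        _ = f ≫ p ≫ f ≫ p := by simp only [Category.assoc]
        _ = f ≫ p := by rw [hp2]
    have key2 : (D.dag p ≫ p) ≫ (f ≫ D.dag f) = f ≫ p := by
      calc (D.dag p ≫ p) ≫ (f ≫ D.dag f)
          = D.dag p ≫ (p ≫ f) ≫ D.dag f := by simp only [Category.assoc]
        _ = D.dag p ≫ (D.dag f ≫ D.dag p) ≫ D.dag f := by rw [hpf]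
        _ = (D.dag p ≫ D.dag f) ≫ (D.dag p ≫ D.dag f) := by simp only [Category.assoc]
        _ = (f ≫ p) ≫ (f ≫ p) := by rw [hfp]
        _ = f ≫ (p ≫ f ≫ p) := by simp only [Category.assoc]
        _ = f ≫ p := by rw [hp2]
    refine ⟨D.dag p ≫ p, ⟨k, ?_⟩, ?_, ?_⟩
    · calc cpow (f ≫ D.dag f) (k + 1) ≫ (D.dag p ≫ p)
          = cpow (f ≫ D.dag f) k ≫ (f ≫ D.dag f) ≫ (D.dag p ≫ p) := by
            simp only [cpow, Category.assoc]
        _ = cpow (f ≫ D.dag f) k ≫ f ≫ p := by rw [key1]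
        _ = cpow (f ≫ D.dag f) k := hk1
    · calc (D.dag p ≫ p) ≫ (f ≫ D.dag f) ≫ (D.dag p ≫ p)
          = ((D.dag p ≫ p) ≫ (f ≫ D.dag f)) ≫ (D.dag p ≫ p) := by
            simp only [Category.assoc]
        _ = (f ≫ p) ≫ (D.dag p ≫ p) := by rw [key2]
        _ = (D.dag p ≫ D.dag f) ≫ (D.dag p ≫ p) := by rw [hfp]
        _ = D.dag p ≫ (D.dag f ≫ D.dag p) ≫ p := by simp only [Category.assoc]
        _ = D.dag p ≫ (p ≫ f) ≫ p := by rw [hpf]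
        _ = D.dag p ≫ (p ≫ f ≫ p) := by simp only [Category.assoc]
        _ = D.dag p ≫ p := by rw [hp2]
    · exact key1.trans key2.symm
  · -- backward: from Drazin inverses of positive maps, via p = f† ≫ d
    intro h A B f
    obtain ⟨d, hdz⟩ := h A B f
    obtain ⟨⟨k, hk⟩, h2, h3⟩ := hdz
    have hxsa : D.dag (f ≫ D.dag f) = f ≫ D.dag f := by rw [D.dag_comp, D.dag_dag]
    have hcomm : (f ≫ D.dag f) ≫ D.dag d = D.dag d ≫ (f ≫ D.dag f) := by
      calc (f ≫ D.dag f) ≫ D.dag d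
          = D.dag (f ≫ D.dag f) ≫ D.dag d := by rw [hxsa]
        _ = D.dag (d ≫ (f ≫ D.dag f)) := (D.dag_comp d _).symm
        _ = D.dag ((f ≫ D.dag f) ≫ d) := by rw [← h3]
        _ = D.dag d ≫ D.dag (f ≫ D.dag f) := D.dag_comp _ d
        _ = D.dag d ≫ (f ≫ D.dag f) := by rw [hxsa]
    have hdagcp : ∀ n, D.dag (cpow (f ≫ D.dag f) n) = cpow (f ≫ D.dag f) n :=
      fun n => by rw [dag_cpow, hxsa]
    have c1 : cpow (f ≫ D.dag f) (k + 1) ≫ D.dag d = cpow (f ≫ D.dag f) k := by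
      have hdg := congrArg D.dag hk
      rw [D.dag_comp, hdagcp, hdagcp] at hdg
      rw [comm_cpow hcomm (k + 1)]
      exact hdg
    have c2 : D.dag d ≫ (f ≫ D.dag f) ≫ D.dag d = D.dag d := by
      have hdg := congrArg D.dag h2
      rw [D.dag_comp d, D.dag_comp (f ≫ D.dag f) d, hxsa] at hdg
      simp only [Category.assoc] at hdg
      simpa using hdg
    have hds : D.dag d = d :=
      drazin_unique ⟨⟨k, c1⟩, c2, hcomm⟩ ⟨⟨k, hk⟩, h2, h3⟩
    have he : cpow (f ≫ D.dag f) (k + 2) ≫ d = cpow (f ≫ D.dag f) (k + 1) := by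
      have := drazin_ext hk 1
      simpa using this
    refine ⟨D.dag f ≫ d, ⟨k + 1, ?_, ?_⟩, ?_, ?_, ?_⟩
    · calc cpow (f ≫ D.dag f) (k + 1) ≫ f ≫ D.dag f ≫ d
          = (cpow (f ≫ D.dag f) (k + 1) ≫ (f ≫ D.dag f)) ≫ d := by
            simp only [Category.assoc]
        _ = cpow (f ≫ D.dag f) (k + 1) := he
    · calc (D.dag f ≫ d) ≫ f ≫ cpow (D.dag f ≫ f) (k + 1)
          = D.dag f ≫ d ≫ (f ≫ cpow (D.dag f ≫ f) (k + 1)) := by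
            simp only [Category.assoc]
        _ = D.dag f ≫ d ≫ (cpow (f ≫ D.dag f) (k + 1) ≫ f) := by
            rw [shift_cpow f (D.dag f) (k + 1)]
        _ = D.dag f ≫ (cpow (f ≫ D.dag f) (k + 1) ≫ d) ≫ f := by
            rw [comm_cpow h3 (k + 1)]; simp only [Category.assoc]
        _ = D.dag f ≫ cpow (f ≫ D.dag f) k ≫ f := by rw [hk]
        _ = (D.dag f ≫ cpow (f ≫ D.dag f) k) ≫ f := by simp only [Category.assoc]
        _ = (cpow (D.dag f ≫ f) k ≫ D.dag f) ≫ f := by rw [shift_cpow (D.dag f) f k]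
        _ = cpow (D.dag f ≫ f) k ≫ (D.dag f ≫ f) := by simp only [Category.assoc]
        _ = cpow (D.dag f ≫ f) (k + 1) := rfl
    · calc (D.dag f ≫ d) ≫ f ≫ (D.dag f ≫ d)
          = D.dag f ≫ (d ≫ (f ≫ D.dag f) ≫ d) := by simp only [Category.assoc]
        _ = D.dag f ≫ d := by rw [h2]
    · calc D.dag (f ≫ D.dag f ≫ d)
          = D.dag ((f ≫ D.dag f) ≫ d) := by rw [Category.assoc]
        _ = D.dag d ≫ D.dag (f ≫ D.dag f) := D.dag_comp _ _
        _ = d ≫ (f ≫ D.dag f) := by rw [hds, hxsa]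
        _ = (f ≫ D.dag f) ≫ d := h3.symm
        _ = f ≫ D.dag f ≫ d := by rw [Category.assoc]
    · calc D.dag ((D.dag f ≫ d) ≫ f)
          = D.dag f ≫ D.dag (D.dag f ≫ d) := D.dag_comp _ _
        _ = D.dag f ≫ D.dag d ≫ D.dag (D.dag f) := by rw [D.dag_comp (D.dag f) d]
        _ = D.dag f ≫ d ≫ f := by rw [hds, D.dag_dag]
        _ = (D.dag f ≫ d) ≫ f := by rw [Category.assoc]
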